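/- Let X be a finite indecomposable quandle, x₀ ∈ X, A an abelian group. Fix a good coset decomposition N = ⊔ σᵢN₀, with c : N → N₀ and σ_y as above. For every a ∈ A and every group homomorphism g : N₀ → A, the map q : X × X → A defined by q(x, y) = a + g(c(x σ_y x₀⁻¹)) satisfies the rack 2-cocycle condition: q(x▷y, x▷z) + q(x, z) = q(x, y▷z) + q(y, z) for all x, y, z ∈ X. -/

import Mathlib

open Rack Quandles

private def qmk {X : Type*} [Rack X] (p : PreEnvelGroup X) : EnvelGroup X := ⟦p⟧

private lemma envel_conj {X : Type*} [Rack X] (gg : Rack.EnvelGroup X) :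
    ∀ u : X, gg * (toEnvelGroup X u : EnvelGroup X) * gg⁻¹ = toEnvelGroup X (envelAction gg u) := by
  induction gg using Quotient.inductionOn with
  | h p =>
    induction p with
    | unit =>
      intro u
      show (1 : EnvelGroup X) * _ * (1 : EnvelGroup X)⁻¹ = toEnvelGroup X (envelAction 1 u)
      simp
    | incl y =>
      intro u
      show (toEnvelGroup X y : EnvelGroup X) * toEnvelGroup X u * (toEnvelGroup X y : EnvelGroup X)⁻¹
          = toEnvelGroup X (envelAction (toEnvelGroup X y) u)
      rw [envelAction_prop]
      exact Quotient.sound (PreEnvelGroupRel'.act_incl y u).rel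
    | mul a b iha ihb =>
      intro u
      have iha' : ∀ u : X, qmk a * toEnvelGroup X u * (qmk a)⁻¹
          = toEnvelGroup X (envelAction (qmk a) u) := iha
      have ihb' : ∀ u : X, qmk b * toEnvelGroup X u * (qmk b)⁻¹
          = toEnvelGroup X (envelAction (qmk b) u) := ihb
      show (qmk a * qmk b) * toEnvelGroup X u * (qmk a * qmk b)⁻¹
          = toEnvelGroup X (envelAction (qmk a * qmk b) u)
      have step : (qmk a * qmk b) * toEnvelGroup X u * (qmk a * qmk b)⁻¹
          = qmk a * (qmk b * toEnvelGroup X u * (qmk b)⁻¹) * (qmk a)⁻¹ := by group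
      rw [step, ihb', iha', map_mul, Equiv.Perm.mul_apply]
    | inv a iha =>
      intro u
      have iha' : ∀ u : X, qmk a * toEnvelGroup X u * (qmk a)⁻¹
          = toEnvelGroup X (envelAction (qmk a) u) := iha
      show (qmk a)⁻¹ * toEnvelGroup X u * ((qmk a)⁻¹)⁻¹
          = toEnvelGroup X (envelAction (qmk a)⁻¹ u)
      have h1 := iha' (envelAction (qmk a)⁻¹ u)
      have h2 : envelAction (qmk a) (envelAction (qmk a)⁻¹ u) = u := by
        rw [map_inv]; exact Equiv.apply_symm_apply _ u
      rw [h2] at h1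
      rw [← h1]; group

private def nn {X : Type*} [Quandle X] (x₀ : X) (s : X → EnvelGroup X) (u v : X) :
    EnvelGroup X :=
  (toEnvelGroup X u : EnvelGroup X) * s v * (toEnvelGroup X x₀ : EnvelGroup X)⁻¹

private def CC {X : Type*} [Quandle X] (x₀ : X) (s : X → EnvelGroup X) (u v : X) :
    EnvelGroup X :=
  (s (u ◃ v))⁻¹ * nn x₀ s u v

/-- Reconstruction, Theorem 1.2 of the paper: for every `a ∈ A` and every
homomorphism `g : N₀ → A`, the map `q(x, y) = a + g(c(x σ_y x₀⁻¹))` is a rack 2-cocycle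
on the finite indecomposable quandle `X`. -/
theorem stmt_14 {X : Type*} [Quandle X] [Fintype X] {A : Type*} [AddCommGroup A]
    (hind : ∀ x y : X, ∃ n ∈ commutator (EnvelGroup X), envelAction n x = y)
    (x₀ : X)
    -- the good coset decomposition
    (σ : EnvelGroup X → EnvelGroup X)
    (hσN : ∀ n ∈ commutator (EnvelGroup X), σ n ∈ commutator (EnvelGroup X))
    (hσc : ∀ n ∈ commutator (EnvelGroup X), envelAction ((σ n)⁻¹ * n) x₀ = x₀)
    (hσcoset : ∀ n ∈ commutator (EnvelGroup X), ∀ m ∈ commutator (EnvelGroup X),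
      envelAction (n⁻¹ * m) x₀ = x₀ → σ n = σ m)
    (hσone : σ 1 = 1)
    (hσconj : ∀ n ∈ commutator (EnvelGroup X),
      σ ((toEnvelGroup X x₀ : EnvelGroup X) * σ n * (toEnvelGroup X x₀ : EnvelGroup X)⁻¹)
        = (toEnvelGroup X x₀ : EnvelGroup X) * σ n * (toEnvelGroup X x₀ : EnvelGroup X)⁻¹)
    -- σ_y : the representative sending x₀ to y
    (s : X → EnvelGroup X)
    (hsN : ∀ y : X, s y ∈ commutator (EnvelGroup X))
    (hsrep : ∀ y : X, σ (s y) = s y)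
    (hsact : ∀ y : X, envelAction (s y) x₀ = y)
    -- the datum (a, g) with g a homomorphism N₀ → A
    (a : A) (g : EnvelGroup X → A)
    (hg : ∀ b c : EnvelGroup X,
      b ∈ commutator (EnvelGroup X) → envelAction b x₀ = x₀ →
      c ∈ commutator (EnvelGroup X) → envelAction c x₀ = x₀ →
      g (b * c) = g b + g c)
    -- the 2-cochain q
    (q : X → X → A)
    (hq : ∀ x y : X, q x y =
      a + g ((σ ((toEnvelGroup X x : EnvelGroup X) * s y
              * (toEnvelGroup X x₀ : EnvelGroup X)⁻¹))⁻¹ *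
            ((toEnvelGroup X x : EnvelGroup X) * s y
              * (toEnvelGroup X x₀ : EnvelGroup X)⁻¹))) :
    ∀ x y z : X, q (x ◃ y) (x ◃ z) + q x z = q x (y ◃ z) + q y z := by
  intro x y z
  have hgconj : ∀ (gg : EnvelGroup X) (u : X),
      gg * (toEnvelGroup X u : EnvelGroup X) * gg⁻¹ = toEnvelGroup X (envelAction gg u) :=
    fun gg => envel_conj gg
  have hfix0 : envelAction (toEnvelGroup X x₀ : EnvelGroup X) x₀ = x₀ := by
    rw [envelAction_prop]; exact Quandle.fix
  have hfixinv : envelAction ((toEnvelGroup X x₀ : EnvelGroup X))⁻¹ x₀ = x₀ := by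
    rw [map_inv]
    exact (Equiv.symm_apply_eq _).mpr hfix0.symm
  -- the action of nn
  have hactn : ∀ u v : X, envelAction (nn x₀ s u v) x₀ = u ◃ v := by
    intro u v
    simp only [nn, map_mul, map_inv, Equiv.Perm.mul_apply]
    rw [map_inv] at hfixinv
    rw [hfixinv, hsact, envelAction_prop]
  -- nn lands in the commutator subgroup
  have hmemN : ∀ u v : X, nn x₀ s u v ∈ commutator (EnvelGroup X) := by
    intro u v
    obtain ⟨m, hm, hmx⟩ := hind x₀ u
    have he : (toEnvelGroup X u : EnvelGroup X)
        = m * (toEnvelGroup X x₀ : EnvelGroup X) * m⁻¹ := by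
      rw [hgconj m x₀, hmx]
    have key : nn x₀ s u v = @Bracket.bracket (EnvelGroup X) (EnvelGroup X) commutatorElement m (toEnvelGroup X x₀) *
        ((toEnvelGroup X x₀ : EnvelGroup X) * s v * (toEnvelGroup X x₀ : EnvelGroup X)⁻¹) := by
      rw [commutatorElement_def]
      simp only [nn, he]
      group
    rw [key]
    refine mul_mem ?_ ?_
    · rw [commutator_def]
      exact Subgroup.commutator_mem_commutator (Subgroup.mem_top m) (Subgroup.mem_top _)
    · exact (Subgroup.commutator_normal ⊤ ⊤).conj_mem _ (hsN v) _
  -- the representative of nn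
  have hσn : ∀ u v : X, σ (nn x₀ s u v) = s (u ◃ v) := by
    intro u v
    have hfix : envelAction ((nn x₀ s u v)⁻¹ * s (u ◃ v)) x₀ = x₀ := by
      rw [map_mul, Equiv.Perm.mul_apply, hsact, map_inv]
      exact (Equiv.symm_apply_eq _).mpr (hactn u v).symm
    rw [hσcoset (nn x₀ s u v) (hmemN u v) (s (u ◃ v)) (hsN _) hfix, hsrep]
  -- q in terms of CC
  have hqC : ∀ u v : X, q u v = a + g (CC x₀ s u v) := by
    intro u v
    rw [hq u v]
    have : (σ ((toEnvelGroup X u : EnvelGroup X) * s v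
        * (toEnvelGroup X x₀ : EnvelGroup X)⁻¹))⁻¹ = (s (u ◃ v))⁻¹ := by
      rw [show (toEnvelGroup X u : EnvelGroup X) * s v
        * (toEnvelGroup X x₀ : EnvelGroup X)⁻¹ = nn x₀ s u v from rfl, hσn]
    rw [this]
    rfl
  -- CC is in N₀
  have hCmem : ∀ u v : X, CC x₀ s u v ∈ commutator (EnvelGroup X) := fun u v =>
    mul_mem (inv_mem (hsN _)) (hmemN u v)
  have hCfix : ∀ u v : X, envelAction (CC x₀ s u v) x₀ = x₀ := by
    intro u v
    have h := hσc (nn x₀ s u v) (hmemN u v)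
    rwa [hσn] at h
  -- the key conjugation identities
  have hkey : ∀ u : X, s u * (toEnvelGroup X x₀ : EnvelGroup X)⁻¹ * (s u)⁻¹
      = (toEnvelGroup X u : EnvelGroup X)⁻¹ := by
    intro u
    have h := hgconj (s u) x₀
    rw [hsact] at h
    rw [← h]; group
  have hmap : ∀ u v : X, (toEnvelGroup X (u ◃ v) : EnvelGroup X)
      = toEnvelGroup X u * toEnvelGroup X v * (toEnvelGroup X u : EnvelGroup X)⁻¹ := by
    intro u v
    rw [← envelAction_prop u v, ← hgconj]
  have hdist : (x ◃ y) ◃ (x ◃ z) = x ◃ (y ◃ z) := (Shelf.self_distrib).symm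
  -- the group-theoretic cocycle identity
  have hgroup : CC x₀ s (x ◃ y) (x ◃ z) * CC x₀ s x z
      = CC x₀ s x (y ◃ z) * CC x₀ s y z := by
    have l1 : CC x₀ s (x ◃ y) (x ◃ z) * CC x₀ s x z
        = (s (x ◃ (y ◃ z)))⁻¹ * toEnvelGroup X (x ◃ y)
          * (s (x ◃ z) * (toEnvelGroup X x₀ : EnvelGroup X)⁻¹ * (s (x ◃ z))⁻¹)
          * toEnvelGroup X x * s z * (toEnvelGroup X x₀ : EnvelGroup X)⁻¹ := by
      simp only [CC, nn, hdist]
      group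
    rw [hkey (x ◃ z), hmap x y, hmap x z] at l1
    have l2 : CC x₀ s x (y ◃ z) * CC x₀ s y z
        = (s (x ◃ (y ◃ z)))⁻¹ * toEnvelGroup X x
          * (s (y ◃ z) * (toEnvelGroup X x₀ : EnvelGroup X)⁻¹ * (s (y ◃ z))⁻¹)
          * toEnvelGroup X y * s z * (toEnvelGroup X x₀ : EnvelGroup X)⁻¹ := by
      simp only [CC, nn]
      group
    rw [hkey (y ◃ z), hmap y z] at l2
    rw [l1, l2]
    group
  -- conclude
  rw [hqC, hqC, hqC, hqC]
  have sum1 : g (CC x₀ s (x ◃ y) (x ◃ z)) + g (CC x₀ s x z)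
      = g (CC x₀ s (x ◃ y) (x ◃ z) * CC x₀ s x z) :=
    (hg _ _ (hCmem _ _) (hCfix _ _) (hCmem _ _) (hCfix _ _)).symm
  have sum2 : g (CC x₀ s x (y ◃ z)) + g (CC x₀ s y z)
      = g (CC x₀ s x (y ◃ z) * CC x₀ s y z) :=
    (hg _ _ (hCmem _ _) (hCfix _ _) (hCmem _ _) (hCfix _ _)).symm
  have rearr : ∀ b c : A, a + b + (a + c) = a + a + (b + c) := by intro b c; abel
  rw [rearr, rearr, sum1, sum2, hgroup]
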